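/- arXiv:2307.01661 — 2 statements merged into one kernel-verified Lean document; each statement's English description precedes it below -/
import Mathlib

section
/- Let G be a finite group. Then the power graph P(G) is a line graph of some graph if and only if G is a cyclic group of prime power order (i.e., G ≅ Z_{p^α} for some prime p and α ≥ 0). -/
open Subgroup

/-- A graph is a line graph if it is isomorphic to the line graph of some graph. -/
def IsLineGraph {V : Type} (Γ : SimpleGraph V) : Prop :=
  ∃ (W : Type) (H : SimpleGraph W), Nonempty (Γ ≃g H.lineGraph)

/-- The power graph of a group: distinct `x`, `y` are adjacent iff one is a power
of the other. -/
def powerGraph (G : Type) [Group G] : SimpleGraph G where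
  Adj x y := x ≠ y ∧ (x ∈ zpowers y ∨ y ∈ zpowers x)
  symm := by constructor; rintro x y ⟨hne, h⟩; exact ⟨hne.symm, h.symm⟩
  loopless := by constructor; rintro x ⟨hne, _⟩; exact hne rfl

/-- The enhanced power graph of a group: distinct `x`, `y` are adjacent iff both are
powers of a common element. -/
def enhancedPowerGraph (G : Type) [Group G] : SimpleGraph G where
  Adj x y := x ≠ y ∧ ∃ z : G, x ∈ zpowers z ∧ y ∈ zpowers z
  symm := by constructor; rintro x y ⟨hne, z, hx, hy⟩; exact ⟨hne.symm, z, hy, hx⟩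
  loopless := by constructor; rintro x ⟨hne, _⟩; exact hne rfl

/-- A vertex is dominating if it is adjacent to all other vertices. -/
def IsDominatingVertex {V : Type} (Γ : SimpleGraph V) (v : V) : Prop :=
  ∀ w : V, w ≠ v → Γ.Adj v w

/-- The graph induced on the non-dominating vertices. -/
def properGraph {V : Type} (Γ : SimpleGraph V) :
    SimpleGraph {v : V | ¬ IsDominatingVertex Γ v} :=
  Γ.induce {v : V | ¬ IsDominatingVertex Γ v}

/-- The proper power graph `P**(G)`. -/
abbrev properPowerGraph (G : Type) [Group G] := properGraph (powerGraph G)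

/-- The proper enhanced power graph `P_E**(G)`. -/
abbrev properEnhancedPowerGraph (G : Type) [Group G] := properGraph (enhancedPowerGraph G)

/-- A maximal cyclic subgroup: cyclic and not properly contained in a cyclic subgroup. -/
def IsMaxCyclic {G : Type} [Group G] (M : Subgroup G) : Prop :=
  IsCyclic M ∧ ∀ N : Subgroup G, IsCyclic N → M ≤ N → N = M

/-- `T(G)`: the intersection of all maximal cyclic subgroups of `G`. -/
def cyclicCore (G : Type) [Group G] : Subgroup G :=
  ⨅ (M : Subgroup G) (_ : IsMaxCyclic M), M

/-- `G` is an elementary abelian 2-group `Z₂ × ⋯ × Z₂`. -/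
def IsElemAbelianTwo (G : Type) [Group G] : Prop :=
  ∃ k : ℕ, 1 ≤ k ∧ Nonempty (G ≃* (Fin k → Multiplicative (ZMod 2)))

section Sym2Lemmas
variable {V : Type*}

lemma sym2_not_three {e : Sym2 V} {a b c : V}
    (ha : a ∈ e) (hb : b ∈ e) (hc : c ∈ e)
    (hab : a ≠ b) (hac : a ≠ c) (hbc : b ≠ c) : False := by
  induction e using Sym2.ind with
  | _ x y =>
    rw [Sym2.mem_iff] at ha hb hc
    rcases ha with rfl | rfl <;> rcases hb with rfl | rfl <;> rcases hc with rfl | rfl <;>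
      simp_all

lemma sym2_eq_of_mem {e : Sym2 V} {a b : V}
    (ha : a ∈ e) (hb : b ∈ e) (hab : a ≠ b) : e = s(a, b) := by
  induction e using Sym2.ind with
  | _ x y =>
    rw [Sym2.mem_iff] at ha hb
    rcases ha with rfl | rfl <;> rcases hb with rfl | rfl
    · exact absurd rfl hab
    · rfl
    · exact Sym2.eq_swap
    · exact absurd rfl hab

end Sym2Lemmas









lemma no_claw_of_isLineGraph {V : Type} {Γ : SimpleGraph V} (hL : IsLineGraph Γ)
    {c a b d : V} (hca : Γ.Adj c a) (hcb : Γ.Adj c b) (hcd : Γ.Adj c d)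
    (hab : ¬Γ.Adj a b) (had : ¬Γ.Adj a d) (hbd : ¬Γ.Adj b d)
    (hab' : a ≠ b) (had' : a ≠ d) (hbd' : b ≠ d) : False := by
  obtain ⟨W, H, ⟨f⟩⟩ := hL
  have key : ∀ {x y : V}, Γ.Adj x y →
      ∃ v : W, v ∈ (f x : Sym2 W) ∧ v ∈ (f y : Sym2 W) := by
    intro x y hxy
    exact (SimpleGraph.lineGraph_adj_iff_exists.1 (f.map_adj_iff.2 hxy)).2
  have keyn : ∀ {x y : V}, x ≠ y → ¬Γ.Adj x y →
      ∀ v : W, v ∈ (f x : Sym2 W) → v ∈ (f y : Sym2 W) → False := by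
    intro x y hne hxy v hvx hvy
    exact hxy (f.map_adj_iff.1 (SimpleGraph.lineGraph_adj_iff_exists.2
      ⟨fun h => hne (f.injective h), v, hvx, hvy⟩))
  obtain ⟨wa, hwa1, hwa2⟩ := key hca
  obtain ⟨wb, hwb1, hwb2⟩ := key hcb
  obtain ⟨wd, hwd1, hwd2⟩ := key hcd
  have h1 : wa ≠ wb := fun h => keyn hab' hab wa hwa2 (h ▸ hwb2)
  have h2 : wa ≠ wd := fun h => keyn had' had wa hwa2 (h ▸ hwd2)
  have h3 : wb ≠ wd := fun h => keyn hbd' hbd wb hwb2 (h ▸ hwd2)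
  exact sym2_not_three hwa1 hwb1 hwd1 h1 h2 h3

lemma no_k5e_of_isLineGraph {V : Type} {Γ : SimpleGraph V} (hL : IsLineGraph Γ)
    {u v w x y : V}
    (huv : Γ.Adj u v) (huw : Γ.Adj u w) (hvw : Γ.Adj v w)
    (hux : Γ.Adj u x) (hvx : Γ.Adj v x) (hwx : Γ.Adj w x)
    (huy : Γ.Adj u y) (hvy : Γ.Adj v y) (hwy : Γ.Adj w y)
    (hxy : ¬Γ.Adj x y) (hxy' : x ≠ y) : False := by
  obtain ⟨W, H, ⟨f⟩⟩ := hL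
  have key : ∀ {s t : V}, Γ.Adj s t →
      ∃ v : W, v ∈ (f s : Sym2 W) ∧ v ∈ (f t : Sym2 W) := by
    intro s t hst
    exact (SimpleGraph.lineGraph_adj_iff_exists.1 (f.map_adj_iff.2 hst)).2
  have hne' : ∀ {s t : V}, Γ.Adj s t → (f s : Sym2 W) ≠ (f t : Sym2 W) := by
    intro s t hst h
    exact (SimpleGraph.lineGraph_adj_iff_exists.1 (f.map_adj_iff.2 hst)).1 (Subtype.ext h)
  have hdisj : ∀ t : W, t ∈ (f x : Sym2 W) → t ∈ (f y : Sym2 W) → False := by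
    intro t htx hty
    exact hxy (f.map_adj_iff.1 (SimpleGraph.lineGraph_adj_iff_exists.2
      ⟨fun h => hxy' (f.injective h), t, htx, hty⟩))
  obtain ⟨wu, hwu1, hwu2⟩ := key hux
  obtain ⟨zu, hzu1, hzu2⟩ := key huy
  obtain ⟨wv, hwv1, hwv2⟩ := key hvx
  obtain ⟨zv, hzv1, hzv2⟩ := key hvy
  obtain ⟨ww, hww1, hww2⟩ := key hwx
  obtain ⟨zw, hzw1, hzw2⟩ := key hwy
  have hwzu : wu ≠ zu := fun h => hdisj wu hwu2 (h ▸ hzu2)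
  have hwzv : wv ≠ zv := fun h => hdisj wv hwv2 (h ▸ hzv2)
  have hwzw : ww ≠ zw := fun h => hdisj ww hww2 (h ▸ hzw2)
  have hEu : (f u : Sym2 W) = s(wu, zu) := sym2_eq_of_mem hwu1 hzu1 hwzu
  have hEv : (f v : Sym2 W) = s(wv, zv) := sym2_eq_of_mem hwv1 hzv1 hwzv
  have hEw : (f w : Sym2 W) = s(ww, zw) := sym2_eq_of_mem hww1 hzw1 hwzw
  -- pairwise sharing
  have pair : ∀ {s t : V} {ws zs wt zt : W}, Γ.Adj s t →
      (f s : Sym2 W) = s(ws, zs) → (f t : Sym2 W) = s(wt, zt) →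
      ws ∈ (f x : Sym2 W) → wt ∈ (f x : Sym2 W) →
      zs ∈ (f y : Sym2 W) → zt ∈ (f y : Sym2 W) →
      ws = wt ∨ zs = zt := by
    intro s t ws zs wt zt hst hs ht hws hwt hzs hzt
    obtain ⟨r, hr1, hr2⟩ := key hst
    rw [hs, Sym2.mem_iff] at hr1
    rw [ht, Sym2.mem_iff] at hr2
    rcases hr1 with h1 | h1 <;> rcases hr2 with h2 | h2
    · exact Or.inl (h1.symm.trans h2)
    · exact (hdisj ws hws (by rw [h1.symm.trans h2]; exact hzt)).elim
    · exact (hdisj wt hwt (by rw [h2.symm.trans h1]; exact hzs)).elim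
    · exact Or.inr (h1.symm.trans h2)
  have puv := pair huv hEu hEv hwu2 hwv2 hzu2 hzv2
  have puw := pair huw hEu hEw hwu2 hww2 hzu2 hzw2
  have pvw := pair hvw hEv hEw hwv2 hww2 hzv2 hzw2
  have nbuv : ¬(wu = wv ∧ zu = zv) := by
    rintro ⟨h1, h2⟩; exact hne' huv (by rw [hEu, hEv, h1, h2])
  have nbuw : ¬(wu = ww ∧ zu = zw) := by
    rintro ⟨h1, h2⟩; exact hne' huw (by rw [hEu, hEw, h1, h2])
  have nbvw : ¬(wv = ww ∧ zv = zw) := by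
    rintro ⟨h1, h2⟩; exact hne' hvw (by rw [hEv, hEw, h1, h2])
  rcases puv with h1 | h1 <;> rcases puw with h2 | h2 <;> rcases pvw with h3 | h3
  · exact sym2_not_three hzu2 hzv2 hzw2 (fun h => nbuv ⟨h1, h⟩)
      (fun h => nbuw ⟨h2, h⟩) (fun h => nbvw ⟨h3, h⟩)
  · exact nbvw ⟨h1.symm.trans h2, h3⟩
  · exact nbuw ⟨h1.trans h3, h2⟩
  · exact nbuv ⟨h1, h2.trans h3.symm⟩
  · exact nbuv ⟨h2.trans h3.symm, h1⟩
  · exact nbuw ⟨h2, h1.trans h3⟩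
  · exact nbvw ⟨h3, h1.symm.trans h2⟩
  · exact sym2_not_three hwu2 hwv2 hww2 (fun h => nbuv ⟨h, h1⟩)
      (fun h => nbuw ⟨h, h2⟩) (fun h => nbvw ⟨h, h3⟩)




def starGraph (V : Type) : SimpleGraph (Option V) where
  Adj a b := a ≠ b ∧ (a = none ∨ b = none)
  symm := by constructor; rintro a b ⟨h1, h2⟩; exact ⟨h1.symm, h2.symm⟩
  loopless := by constructor; rintro a ⟨h1, _⟩; exact h1 rfl

lemma isLineGraph_of_complete {V : Type} {Γ : SimpleGraph V}
    (h : ∀ x y : V, x ≠ y → Γ.Adj x y) : IsLineGraph Γ := by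
  refine ⟨Option V, starGraph V, ⟨?_⟩⟩
  have hmem : ∀ g : V, s(none, some g) ∈ (starGraph V).edgeSet := by
    intro g
    rw [SimpleGraph.mem_edgeSet]
    exact ⟨by simp, Or.inl rfl⟩
  let φ : V → (starGraph V).edgeSet := fun g => ⟨s(none, some g), hmem g⟩
  have hinj : Function.Injective φ := by
    intro a b hab
    have := congrArg Subtype.val hab
    simp only [φ, Sym2.eq, Sym2.rel_iff', Prod.mk.injEq, Option.some.injEq, Prod.swap_prod_mk,
      reduceCtorEq, false_and, or_false] at this
    exact this.2
  have hsurj : Function.Surjective φ := by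
    rintro ⟨e, he⟩
    revert he
    induction e using Sym2.ind with
    | _ a b =>
      intro he
      rw [SimpleGraph.mem_edgeSet] at he
      obtain ⟨hne, hor⟩ := he
      rcases hor with rfl | rfl
      · obtain ⟨g, rfl⟩ := Option.ne_none_iff_exists'.1 (Ne.symm hne)
        exact ⟨g, rfl⟩
      · obtain ⟨g, rfl⟩ := Option.ne_none_iff_exists'.1 hne
        exact ⟨g, Subtype.ext Sym2.eq_swap⟩
  refine ⟨Equiv.ofBijective φ ⟨hinj, hsurj⟩, ?_⟩
  intro a b
  rw [show (Equiv.ofBijective φ ⟨hinj, hsurj⟩) a = φ a from rfl,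
    show (Equiv.ofBijective φ ⟨hinj, hsurj⟩) b = φ b from rfl,
    SimpleGraph.lineGraph_adj_iff_exists]
  constructor
  · rintro ⟨hne, -⟩
    exact h a b fun hab => hne (by rw [hab])
  · intro hadj
    refine ⟨fun hh => Γ.ne_of_adj hadj (hinj hh), none, by simp [φ], by simp [φ]⟩


lemma zmod_exists_smul {n : ℕ} [NeZero n] (x y : ZMod n)
    (h : Nat.gcd (ZMod.val y) n ∣ ZMod.val x) : ∃ k : ℤ, k • y = x := by
  obtain ⟨m, hm⟩ := h
  refine ⟨Nat.gcdA (ZMod.val y) n * m, ?_⟩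
  have h1 : ((Nat.gcd (ZMod.val y) n : ℤ) : ZMod n) = (Nat.gcdA (ZMod.val y) n : ZMod n) * y := by
    rw [Nat.gcd_eq_gcd_ab]
    push_cast
    rw [ZMod.natCast_self, ZMod.natCast_val, ZMod.cast_id]
    ring
  have h2 : (ZMod.val x : ZMod n) = x := by rw [ZMod.natCast_val, ZMod.cast_id]
  rw [zsmul_eq_mul]
  push_cast
  rw [← h2, hm]
  have h1' : ((Nat.gcd (ZMod.val y) n : ℕ) : ZMod n) = (Nat.gcdA (ZMod.val y) n : ZMod n) * y := by
    exact_mod_cast h1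
  push_cast
  rw [h1']
  ring
lemma zmod_mem_or_mem {p α : ℕ} (hp : p.Prime) (x y : Multiplicative (ZMod (p ^ α))) :
    x ∈ zpowers y ∨ y ∈ zpowers x := by
  haveI : NeZero (p ^ α) := ⟨pow_ne_zero _ hp.ne_zero⟩
  set a := Multiplicative.toAdd x with ha
  set b := Multiplicative.toAdd y with hb
  obtain ⟨i, -, hi⟩ := (Nat.dvd_prime_pow hp).1 (Nat.gcd_dvd_right (ZMod.val a) (p ^ α))
  obtain ⟨j, -, hj⟩ := (Nat.dvd_prime_pow hp).1 (Nat.gcd_dvd_right (ZMod.val b) (p ^ α))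
  rcases le_total i j with hij | hij
  · -- gcd(a) = p^i ∣ p^j = gcd(b) ∣ b.val : y ∈ zpowers x
    refine Or.inr ?_
    obtain ⟨k, hk⟩ := zmod_exists_smul b a
      (dvd_trans (by rw [hi, hj]; exact pow_dvd_pow p hij) (Nat.gcd_dvd_left _ _))
    exact mem_zpowers_iff.2 ⟨k, Multiplicative.toAdd.injective (by rw [toAdd_zpow]; exact hk)⟩
  · refine Or.inl ?_
    obtain ⟨k, hk⟩ := zmod_exists_smul a b
      (dvd_trans (by rw [hi, hj]; exact pow_dvd_pow p hij) (Nat.gcd_dvd_left _ _))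
    exact mem_zpowers_iff.2 ⟨k, Multiplicative.toAdd.injective (by rw [toAdd_zpow]; exact hk)⟩

lemma mem_zpowers_map {G H : Type*} [Group G] [Group H] (e : G ≃* H) {x y : G} :
    x ∈ zpowers y ↔ e x ∈ zpowers (e y) := by
  simp only [mem_zpowers_iff]
  constructor
  · rintro ⟨k, hk⟩; exact ⟨k, by rw [← map_zpow, hk]⟩
  · rintro ⟨k, hk⟩; exact ⟨k, e.injective (by rw [map_zpow, hk])⟩




lemma isCyclic_zpowers {G : Type} [Group G] (g : G) : IsCyclic (zpowers g) := by
  refine ⟨⟨g, mem_zpowers g⟩, ?_⟩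
  rintro ⟨x, k, rfl⟩
  exact mem_zpowers_iff.2 ⟨k, Subtype.ext (by simp)⟩

lemma exists_zpowers_eq {G : Type} [Group G] (M : Subgroup G) (h : IsCyclic M) :
    ∃ g : G, zpowers g = M := by
  obtain ⟨⟨g, hg⟩, hgen⟩ := h.exists_generator
  refine ⟨g, le_antisymm (zpowers_le.2 hg) ?_⟩
  intro m hm
  obtain ⟨k, hk⟩ := mem_zpowers_iff.1 (hgen ⟨m, hm⟩)
  exact mem_zpowers_iff.2 ⟨k, by simpa using congrArg Subtype.val hk⟩

lemma subgroup_union_top {G : Type} [Group G] (M N : Subgroup G)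
    (h : ∀ x : G, x ∈ M ∨ x ∈ N) : M = ⊤ ∨ N = ⊤ := by
  by_cases hMN : M ≤ N
  · exact Or.inr (eq_top_iff.2 fun x _ => (h x).elim (fun hx => hMN hx) id)
  by_cases hNM : N ≤ M
  · exact Or.inl (eq_top_iff.2 fun x _ => (h x).elim id fun hx => hNM hx)
  obtain ⟨a, haM, haN⟩ := SetLike.not_le_iff_exists.1 hMN
  obtain ⟨b, hbN, hbM⟩ := SetLike.not_le_iff_exists.1 hNM
  rcases h (a * b) with hab | hab
  · exact (hbM (by simpa using mul_mem (inv_mem haM) hab)).elim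
  · exact (haN (by simpa using mul_mem hab (inv_mem hbN))).elim

lemma powerGraph_adj {G : Type} [Group G] {x y : G} :
    (powerGraph G).Adj x y ↔ x ≠ y ∧ (x ∈ zpowers y ∨ y ∈ zpowers x) := Iff.rfl


/-- `P(G)` is a line graph iff `G` is cyclic of prime power order. -/
theorem powerGraph_isLineGraph_iff (G : Type) [Group G] [Fintype G] :
    IsLineGraph (powerGraph G) ↔
      ∃ p α : ℕ, p.Prime ∧ Nonempty (G ≃* Multiplicative (ZMod (p ^ α))) := by
  classical
  constructor
  · intro hL
    have hmax : ∀ x : G, ∃ M : Subgroup G, IsCyclic M ∧ x ∈ M ∧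
        ∀ N : Subgroup G, IsCyclic N → M ≤ N → N = M := by
      intro x
      have hfin : {H : Subgroup G | IsCyclic H ∧ x ∈ H}.Finite := Set.toFinite _
      obtain ⟨M, hMs, hMmax⟩ := hfin.toFinset.exists_maximal
        ⟨zpowers x, by rw [Set.Finite.mem_toFinset]; exact ⟨_root_.isCyclic_zpowers x, mem_zpowers x⟩⟩
      rw [Set.Finite.mem_toFinset] at hMs
      refine ⟨M, hMs.1, hMs.2, fun N hN hMN => ?_⟩
      by_contra hne
      exact hne (le_antisymm (hMmax (by show N ∈ hfin.toFinset; rw [Set.Finite.mem_toFinset]; exact ⟨hN, hMN hMs.2⟩)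
        hMN) hMN)
    choose Mf hMc hMmem hMmax using hmax
    have topCyc : ∀ x : G, Mf x = ⊤ → IsCyclic G := by
      intro x hx
      have : IsCyclic (⊤ : Subgroup G) := hx ▸ hMc x
      exact isCyclic_of_surjective Subgroup.topEquiv.toMonoidHom Subgroup.topEquiv.surjective
    have hcyc : IsCyclic G := by
      by_contra hnc
      have hex : ∃ x1 x2 x3 : G, Mf x1 ≠ Mf x2 ∧ Mf x1 ≠ Mf x3 ∧ Mf x2 ≠ Mf x3 := by
        by_contra hno
        push_neg at hno
        apply hnc
        by_cases h2 : ∀ x : G, Mf x = Mf 1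
        · refine topCyc 1 (eq_top_iff.2 fun x _ => ?_)
          exact (h2 x) ▸ hMmem x
        · push_neg at h2
          obtain ⟨x0, hx0⟩ := h2
          have hall : ∀ x : G, x ∈ Mf 1 ∨ x ∈ Mf x0 := by
            intro x
            by_cases hxa : Mf x = Mf 1
            · exact Or.inl (hxa ▸ hMmem x)
            · by_cases hxb : Mf x = Mf x0
              · exact Or.inr (hxb ▸ hMmem x)
              · exact absurd (hno x 1 x0 hxa hxb).symm hx0
          rcases subgroup_union_top _ _ hall with h | h
          · exact topCyc 1 h
          · exact topCyc x0 h
      obtain ⟨x1, x2, x3, h12, h13, h23⟩ := hex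
      obtain ⟨g1, hg1⟩ := exists_zpowers_eq _ (hMc x1)
      obtain ⟨g2, hg2⟩ := exists_zpowers_eq _ (hMc x2)
      obtain ⟨g3, hg3⟩ := exists_zpowers_eq _ (hMc x3)
      have key : ∀ {a b : G} {xa xb : G}, zpowers a = Mf xa → zpowers b = Mf xb →
          Mf xa ≠ Mf xb → ¬(powerGraph G).Adj a b ∧ a ≠ b := by
        intro a b xa xb hza hzb hne
        have hne' : a ≠ b := fun h => hne (by rw [← hza, ← hzb, h])
        refine ⟨?_, hne'⟩
        rintro ⟨-, hmem | hmem⟩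
        · have hle : Mf xa ≤ Mf xb := by rw [← hza, ← hzb]; exact zpowers_le.2 hmem
          exact hne (hMmax xa _ (hMc xb) hle).symm
        · have hle : Mf xb ≤ Mf xa := by rw [← hza, ← hzb]; exact zpowers_le.2 hmem
          exact hne (hMmax xb _ (hMc xa) hle)
      obtain ⟨hn12, hne12⟩ := key hg1 hg2 h12
      obtain ⟨hn13, hne13⟩ := key hg1 hg3 h13
      obtain ⟨hn23, hne23⟩ := key hg2 hg3 h23
      have hgne : ∀ {a : G} {xa xb : G}, zpowers a = Mf xa → Mf xa ≠ Mf xb → a ≠ 1 := by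
        intro a xa xb hza hne h
        apply hne
        refine (hMmax xa _ (hMc xb) ?_).symm
        rw [← hza, h, zpowers_one_eq_bot]
        exact bot_le
      have hg1ne : g1 ≠ 1 := hgne hg1 h12
      have hg2ne : g2 ≠ 1 := hgne hg2 h23
      have hg3ne : g3 ≠ 1 := hgne hg3 (Ne.symm h13)
      exact no_claw_of_isLineGraph hL
        (powerGraph_adj.2 ⟨Ne.symm hg1ne, Or.inl (one_mem _)⟩)
        (powerGraph_adj.2 ⟨Ne.symm hg2ne, Or.inl (one_mem _)⟩)
        (powerGraph_adj.2 ⟨Ne.symm hg3ne, Or.inl (one_mem _)⟩)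
        hn12 hn13 hn23 hne12 hne13 hne23
    obtain ⟨g, hg⟩ := hcyc.exists_generator
    set n := Fintype.card G with hn
    have hgord : orderOf g = n := by
      rw [orderOf_eq_card_of_forall_mem_zpowers hg, Nat.card_eq_fintype_card]
    have hn0 : n ≠ 0 := Fintype.card_ne_zero
    have huniq : ∀ q r : ℕ, q.Prime → r.Prime → q ∣ n → r ∣ n → q = r := by
      intro q r hq hr hqn hrn
      by_contra hqr
      haveI := Fact.mk hq
      haveI := Fact.mk hr
      obtain ⟨x, hx⟩ := exists_prime_orderOf_dvd_card q hqn
      obtain ⟨y, hy⟩ := exists_prime_orderOf_dvd_card r hrn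
      have hqrn : q * r ∣ n := ((Nat.coprime_primes hq hr).2 hqr).mul_dvd_of_dvd_of_dvd hqn hrn
      have hqrle : q * r ≤ n := Nat.le_of_dvd (Nat.pos_of_ne_zero hn0) hqrn
      have hq1 : 2 ≤ q := hq.two_le
      have hr1 : 2 ≤ r := hr.two_le
      have hqltn : q < n := lt_of_lt_of_le (by nlinarith) hqrle
      have hrltn : r < n := lt_of_lt_of_le (by nlinarith) hqrle
      have h4n : 4 ≤ n := le_trans (by nlinarith) hqrle
      have hgn1 : g ≠ 1 := fun h => by rw [h, orderOf_one] at hgord; omega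
      have hginv : g ≠ g⁻¹ := by
        intro h
        have h2 : g ^ 2 = 1 := by rw [pow_two]; nth_rewrite 2 [h]; exact mul_inv_cancel g
        have := Nat.le_of_dvd (by norm_num) (hgord ▸ orderOf_dvd_of_pow_eq_one h2)
        omega
      have hginv1 : g⁻¹ ≠ 1 := fun h => hgn1 (inv_eq_one.1 h)
      have hx1 : x ≠ 1 := fun h => by rw [h, orderOf_one] at hx; omega
      have hy1 : y ≠ 1 := fun h => by rw [h, orderOf_one] at hy; omega
      have hxg : x ≠ g := fun h => by rw [h, hgord] at hx; omega
      have hyg : y ≠ g := fun h => by rw [h, hgord] at hy; omega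
      have hxginv : x ≠ g⁻¹ := fun h => by rw [h, orderOf_inv, hgord] at hx; omega
      have hyginv : y ≠ g⁻¹ := fun h => by rw [h, orderOf_inv, hgord] at hy; omega
      have hxy : x ≠ y := fun h => hqr (by rw [← hx, ← hy, h])
      have hnxy : ¬(powerGraph G).Adj x y := by
        rintro ⟨-, hmem | hmem⟩
        · exact hqr ((Nat.prime_dvd_prime_iff_eq hq hr).1
            (by rw [← hx, ← hy]; exact orderOf_dvd_of_mem_zpowers hmem))
        · exact hqr (((Nat.prime_dvd_prime_iff_eq hr hq).1
            (by rw [← hx, ← hy]; exact orderOf_dvd_of_mem_zpowers hmem)).symm)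
      exact no_k5e_of_isLineGraph hL (u := 1) (v := g) (w := g⁻¹) (x := x) (y := y)
        (powerGraph_adj.2 ⟨Ne.symm hgn1, Or.inl (one_mem _)⟩)
        (powerGraph_adj.2 ⟨Ne.symm hginv1, Or.inl (one_mem _)⟩)
        (powerGraph_adj.2 ⟨hginv, Or.inr (inv_mem (mem_zpowers g))⟩)
        (powerGraph_adj.2 ⟨Ne.symm hx1, Or.inl (one_mem _)⟩)
        (powerGraph_adj.2 ⟨Ne.symm hxg, Or.inr (hg x)⟩)
        (powerGraph_adj.2 ⟨Ne.symm hxginv, Or.inr (by rw [zpowers_inv]; exact hg x)⟩)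
        (powerGraph_adj.2 ⟨Ne.symm hy1, Or.inl (one_mem _)⟩)
        (powerGraph_adj.2 ⟨Ne.symm hyg, Or.inr (hg y)⟩)
        (powerGraph_adj.2 ⟨Ne.symm hyginv, Or.inr (by rw [zpowers_inv]; exact hg y)⟩)
        hnxy hxy
    by_cases hn1 : n = 1
    · refine ⟨2, 0, Nat.prime_two, ⟨?_⟩⟩
      haveI : Subsingleton G := Fintype.card_le_one_iff_subsingleton.1 (by omega)
      haveI : Unique G := uniqueOfSubsingleton 1
      haveI : Unique (Multiplicative (ZMod (2 ^ 0))) := by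
        refine @uniqueOfSubsingleton _ ?_ 1
        show Subsingleton (ZMod 1)
        infer_instance
      exact MulEquiv.ofUnique
    · have hp : n.minFac.Prime := Nat.minFac_prime hn1
      have hnpow : n = n.minFac ^ n.primeFactorsList.length :=
        Nat.eq_prime_pow_of_unique_prime_dvd hn0
          (fun {d} hd hdvd => huniq d n.minFac hd hp hdvd (Nat.minFac_dvd n))
      refine ⟨n.minFac, n.primeFactorsList.length, hp, ⟨?_⟩⟩
      have hcard : Nat.card G = n.minFac ^ n.primeFactorsList.length := by
        rw [Nat.card_eq_fintype_card, ← hn]; exact hnpow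
      rw [← hcard]
      exact (zmodCyclicMulEquiv hcyc).symm
  · rintro ⟨p, α, hp, ⟨e⟩⟩
    apply isLineGraph_of_complete
    intro x y hxy
    refine powerGraph_adj.2 ⟨hxy, ?_⟩
    rcases zmod_mem_or_mem hp (e x) (e y) with h | h
    · exact Or.inl ((mem_zpowers_map e).2 h)
    · exact Or.inr ((mem_zpowers_map e).2 h)
end

section
/- Let G be a finite non-cyclic group and let T(G) denote the intersection of all maximal cyclic subgroups of G. Then the proper enhanced power graph P_E**(G) is a line graph of some graph if and only if both of the following hold: (i) for any two distinct maximal cyclic subgroups M_i, M_j of G, |(M_i ∩ M_j) \ T(G)| ≤ 1; (ii) for any three pairwise distinct maximal cyclic subgroups M_i, M_j, M_k of G, (M_i ∩ M_j ∩ M_k) \ T(G) = ∅. -/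
open Subgroup

set_option linter.unusedSectionVars false

section Aux
variable {G : Type} [Group G] [Fintype G]

namespace PfAux

lemma exists_gen (M : Subgroup G) (h : IsCyclic M) : ∃ m : G, zpowers m = M := by
  obtain ⟨g, hg⟩ := h.exists_generator
  refine ⟨(g : G), le_antisymm ?_ ?_⟩
  · rw [zpowers_le]; exact g.2
  · intro x hx
    obtain ⟨k, hk⟩ := hg ⟨x, hx⟩
    exact ⟨k, by simpa using congrArg (Subtype.val) hk⟩

lemma zpowers_isCyclic (x : G) : IsCyclic (zpowers x) :=
  ⟨⟨⟨x, mem_zpowers x⟩, fun ⟨y, k, hk⟩ => ⟨k, Subtype.ext (by simpa using hk)⟩⟩⟩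

lemma mem_maxCyclic (x : G) : ∃ M : Subgroup G, IsMaxCyclic M ∧ x ∈ M := by
  have hfin : ({N : Subgroup G | IsCyclic N ∧ x ∈ N}).Finite := Set.toFinite _
  obtain ⟨M, hM, hmax⟩ := Set.Finite.exists_maximalFor id _ hfin
    ⟨zpowers x, zpowers_isCyclic x, mem_zpowers x⟩
  exact ⟨M, ⟨hM.1, fun N hN hle => le_antisymm (hmax ⟨hN, hle hM.2⟩ hle) hle⟩, hM.2⟩

lemma cyclicCore_le {M : Subgroup G} (hM : IsMaxCyclic M) : cyclicCore G ≤ M := by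
  intro x hx
  exact (Subgroup.mem_iInf.mp ((Subgroup.mem_iInf.mp hx) M)) hM

/-- adjacency characterization -/
lemma adj_iff_maxCyclic {a b : G} (hne : a ≠ b) :
    (enhancedPowerGraph G).Adj a b ↔ ∃ M : Subgroup G, IsMaxCyclic M ∧ a ∈ M ∧ b ∈ M := by
  constructor
  · rintro ⟨-, z, ha, hb⟩
    obtain ⟨M, hM, hz⟩ := mem_maxCyclic z
    have hle : zpowers z ≤ M := by rw [zpowers_le]; exact hz
    exact ⟨M, hM, hle ha, hle hb⟩
  · rintro ⟨M, hM, ha, hb⟩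
    obtain ⟨m, hm⟩ := exists_gen M hM.1
    exact ⟨hne, m, by rw [hm]; exact ha, by rw [hm]; exact hb⟩

lemma dominating_iff (x : G) :
    IsDominatingVertex (enhancedPowerGraph G) x ↔ x ∈ cyclicCore G := by
  constructor
  · intro hd
    rw [cyclicCore, Subgroup.mem_iInf]
    intro M
    rw [Subgroup.mem_iInf]
    intro hM
    by_cases hxM : x ∈ M
    · exact hxM
    · obtain ⟨m, hm⟩ := exists_gen M hM.1
      have hmx : m ≠ x := fun h => hxM (h ▸ hm ▸ mem_zpowers m)
      obtain ⟨N, hN, hxN, hmN⟩ := (adj_iff_maxCyclic (Ne.symm hmx)).mp (hd m hmx)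
      have : M ≤ N := by rw [← hm, zpowers_le]; exact hmN
      rw [hM.2 N hN.1 this] at hxN
      exact absurd hxN hxM
  · intro hx w hw
    obtain ⟨M, hM, hwM⟩ := mem_maxCyclic w
    exact ((adj_iff_maxCyclic (Ne.symm hw)).mpr ⟨M, hM, cyclicCore_le hM hx, hwM⟩)

/-- a generator of a maximal cyclic subgroup is in no other maximal cyclic subgroup -/
lemma gen_unique {M N : Subgroup G} (hM : IsMaxCyclic M) (hN : IsMaxCyclic N)
    {m : G} (hm : zpowers m = M) (hmN : m ∈ N) : N = M := by
  have : M ≤ N := by rw [← hm, zpowers_le]; exact hmN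
  exact (hM.2 N hN.1 this) 

end PfAux
end Aux
set_option linter.unusedSectionVars false
set_option maxHeartbeats 1000000

section Aux2
variable {G : Type} [Group G] [Fintype G]

namespace PfAux

abbrev Vset (G : Type) [Group G] : Set G := {v : G | ¬ IsDominatingVertex (enhancedPowerGraph G) v}

lemma properAdj_iff {a b : ↥(Vset G)} :
    (properEnhancedPowerGraph G).Adj a b ↔ (enhancedPowerGraph G).Adj ↑a ↑b := Iff.rfl

lemma notMem_core (v : ↥(Vset G)) : (v : G) ∉ cyclicCore G :=
  fun h => v.2 ((dominating_iff _).mpr h)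

lemma mem_Vset_of_notMem_core {x : G} (h : x ∉ cyclicCore G) : x ∈ Vset G :=
  fun hd => h ((dominating_iff x).mp hd)

lemma gen_not_core {M N : Subgroup G} (hM : IsMaxCyclic M) (hN : IsMaxCyclic N)
    (hne : N ≠ M) {m : G} (hm : zpowers m = M) : m ∉ cyclicCore G :=
  fun h => hne (gen_unique hM hN hm (cyclicCore_le hN h))

lemma ne_gen {M N : Subgroup G} (hM : IsMaxCyclic M) (hN : IsMaxCyclic N)
    (hne : N ≠ M) {x m : G} (hxN : x ∈ N) (hm : zpowers m = M) : x ≠ m := by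
  rintro rfl
  exact hne (gen_unique hM hN hm hxN)

variable {W : Type} {H : SimpleGraph W}

lemma shared_imp_adj (φ : properEnhancedPowerGraph G ≃g H.lineGraph) {a b : ↥(Vset G)}
    (hne : a ≠ b) {r : W} (hra : r ∈ (↑(φ a) : Sym2 W)) (hrb : r ∈ (↑(φ b) : Sym2 W)) :
    (properEnhancedPowerGraph G).Adj a b := by
  have hne' : φ a ≠ φ b := fun h => hne (φ.toEquiv.injective h)
  exact φ.map_adj_iff.mp (SimpleGraph.lineGraph_adj_iff_exists.mpr ⟨hne', r, hra, hrb⟩)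

lemma adj_of_mem {M : Subgroup G} (hM : IsMaxCyclic M) {a b : ↥(Vset G)}
    (hne : (a : G) ≠ (b : G)) (ha : (a : G) ∈ M) (hb : (b : G) ∈ M) :
    (properEnhancedPowerGraph G).Adj a b :=
  properAdj_iff.mpr ((adj_iff_maxCyclic hne).mpr ⟨M, hM, ha, hb⟩)

lemma not_adj_gens {M N : Subgroup G} (hM : IsMaxCyclic M) (hN : IsMaxCyclic N)
    (hne : M ≠ N) {m n : G} (hm : zpowers m = M) (hn : zpowers n = N)
    {a b : ↥(Vset G)} (ha : (a : G) = m) (hb : (b : G) = n) :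
    ¬ (properEnhancedPowerGraph G).Adj a b := by
  intro h
  have h' := properAdj_iff.mp h
  rw [ha, hb] at h'
  have hmn : m ≠ n := by rintro rfl; exact hne (by rw [← hm, ← hn])
  obtain ⟨K, hK, hmK, hnK⟩ := (adj_iff_maxCyclic hmn).mp h'
  exact hne ((gen_unique hM hK hm hmK).symm.trans (gen_unique hN hK hn hnK))

/-- condition (ii) holds for line graphs -/
lemma cond2_of_iso (φ : properEnhancedPowerGraph G ≃g H.lineGraph) :
    ∀ Mi Mj Mk : Subgroup G, IsMaxCyclic Mi → IsMaxCyclic Mj → IsMaxCyclic Mk →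
      Mi ≠ Mj → Mj ≠ Mk → Mi ≠ Mk →
      ((↑(Mi ⊓ Mj ⊓ Mk) : Set G) \ ↑(cyclicCore G)) = (∅ : Set G) := by
  intro Mi Mj Mk hMi hMj hMk hij hjk hik
  rw [Set.eq_empty_iff_forall_notMem]
  rintro x ⟨hxmem, hxT⟩
  have hxMi : x ∈ Mi := hxmem.1.1
  have hxMj : x ∈ Mj := hxmem.1.2
  have hxMk : x ∈ Mk := hxmem.2
  obtain ⟨mi, hmi⟩ := exists_gen Mi hMi.1
  obtain ⟨mj, hmj⟩ := exists_gen Mj hMj.1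
  obtain ⟨mk, hmk⟩ := exists_gen Mk hMk.1
  set vx : ↥(Vset G) := ⟨x, mem_Vset_of_notMem_core hxT⟩ with hvx
  set vi : ↥(Vset G) := ⟨mi, mem_Vset_of_notMem_core (gen_not_core hMi hMj hij.symm hmi)⟩ with hvi
  set vj : ↥(Vset G) := ⟨mj, mem_Vset_of_notMem_core (gen_not_core hMj hMi hij hmj)⟩ with hvj
  set vk : ↥(Vset G) := ⟨mk, mem_Vset_of_notMem_core (gen_not_core hMk hMi hik hmk)⟩ with hvk
  -- adjacency of x to each generator
  have haxi : (properEnhancedPowerGraph G).Adj vx vi :=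
    adj_of_mem hMi (ne_gen hMi hMj hij.symm hxMj hmi) hxMi (hmi ▸ mem_zpowers mi)
  have haxj : (properEnhancedPowerGraph G).Adj vx vj :=
    adj_of_mem hMj (ne_gen hMj hMi hij hxMi hmj) hxMj (hmj ▸ mem_zpowers mj)
  have haxk : (properEnhancedPowerGraph G).Adj vx vk :=
    adj_of_mem hMk (ne_gen hMk hMi hik hxMi hmk) hxMk (hmk ▸ mem_zpowers mk)
  have hnij : ¬ (properEnhancedPowerGraph G).Adj vi vj := not_adj_gens hMi hMj hij hmi hmj rfl rfl
  have hnjk : ¬ (properEnhancedPowerGraph G).Adj vj vk := not_adj_gens hMj hMk hjk hmj hmk rfl rfl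
  have hnik : ¬ (properEnhancedPowerGraph G).Adj vi vk := not_adj_gens hMi hMk hik hmi hmk rfl rfl
  have hmij : mi ≠ mj := by rintro rfl; exact hij (hmi.symm.trans hmj)
  have hmjk : mj ≠ mk := by rintro rfl; exact hjk (hmj.symm.trans hmk)
  have hmik : mi ≠ mk := by rintro rfl; exact hik (hmi.symm.trans hmk)
  have hvij : vi ≠ vj := fun h => hmij (congrArg Subtype.val h)
  have hvjk : vj ≠ vk := fun h => hmjk (congrArg Subtype.val h)
  have hvik : vi ≠ vk := fun h => hmik (congrArg Subtype.val h)
  have hcon : ∀ (a b : ↥(Vset G)), ¬ (properEnhancedPowerGraph G).Adj a b → a ≠ b →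
      ∀ r : W, r ∈ (↑(φ a) : Sym2 W) → r ∈ (↑(φ b) : Sym2 W) → False :=
    fun a b hn hne r h1 h2 => hn (shared_imp_adj φ hne h1 h2)
  obtain ⟨u, v, huv⟩ : ∃ u v : W, (↑(φ vx) : Sym2 W) = s(u, v) :=
    Sym2.ind (f := fun z => ∃ u v, z = s(u, v)) (fun u v => ⟨u, v, rfl⟩) _
  obtain ⟨-, w1, hw1x, hw1i⟩ := SimpleGraph.lineGraph_adj_iff_exists.mp (φ.map_adj_iff.mpr haxi)
  obtain ⟨-, w2, hw2x, hw2j⟩ := SimpleGraph.lineGraph_adj_iff_exists.mp (φ.map_adj_iff.mpr haxj)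
  obtain ⟨-, w3, hw3x, hw3k⟩ := SimpleGraph.lineGraph_adj_iff_exists.mp (φ.map_adj_iff.mpr haxk)
  rw [huv, Sym2.mem_iff] at hw1x hw2x hw3x
  rcases hw1x with rfl | rfl <;> rcases hw2x with rfl | rfl <;> rcases hw3x with rfl | rfl
  · exact hcon vi vj hnij hvij _ hw1i hw2j
  · exact hcon vi vj hnij hvij _ hw1i hw2j
  · exact hcon vi vk hnik hvik _ hw1i hw3k
  · exact hcon vj vk hnjk hvjk _ hw2j hw3k
  · exact hcon vj vk hnjk hvjk _ hw2j hw3k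
  · exact hcon vi vk hnik hvik _ hw1i hw3k
  · exact hcon vi vj hnij hvij _ hw1i hw2j
  · exact hcon vi vj hnij hvij _ hw1i hw2j

end PfAux
end Aux2
section Aux3
variable {G : Type} [Group G] [Fintype G] {W : Type} {H : SimpleGraph W}

namespace PfAux

lemma step1 (φ : properEnhancedPowerGraph G ≃g H.lineGraph)
    {M M' : Subgroup G} (hM : IsMaxCyclic M) (hM' : IsMaxCyclic M')
    {x y : G} (hyM : y ∈ M) (hyM' : y ∈ M') (hxy : x ≠ y)
    (h2x : ∀ N : Subgroup G, IsMaxCyclic N → x ∈ N → N = M ∨ N = M')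
    (vx vy : ↥(Vset G)) (hvx : (vx : G) = x) (hvy : (vy : G) = y)
    {q q' : W} (hqq' : q ≠ q')
    (hqx : q ∈ (↑(φ vx) : Sym2 W))
    (hqy : q ∉ (↑(φ vy) : Sym2 W))
    (hyxr : ∀ r, r ∈ (↑(φ vy) : Sym2 W) → r = q' ∨ r ∈ (↑(φ vx) : Sym2 W)) :
    ∀ f ∈ H.edgeSet, q ∈ f → f = ↑(φ vx) ∨ f = s(q, q') := by
  intro f hf hqf
  by_cases hfx : f = ↑(φ vx)
  · exact Or.inl hfx
  set u : ↥(Vset G) := φ.symm ⟨f, hf⟩ with hu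
  have huf : (↑(φ u) : Sym2 W) = f := by
    rw [hu]
    simp
  have hune : u ≠ vx := fun h => hfx (by rw [← huf, h])
  have hadjux : (properEnhancedPowerGraph G).Adj u vx :=
    shared_imp_adj φ hune (by rw [huf]; exact hqf) hqx
  have hadjux' := properAdj_iff.mp hadjux
  rw [hvx] at hadjux'
  obtain ⟨N, hN, huN, hxN⟩ := (adj_iff_maxCyclic hadjux'.1).mp hadjux'
  have hyN : y ∈ N := by rcases h2x N hN hxN with rfl | rfl <;> assumption
  by_cases huy : (u : G) = y
  · exact absurd (show q ∈ (↑(φ vy) : Sym2 W) by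
      rw [← Subtype.ext (huy.trans hvy.symm), huf]; exact hqf) hqy
  · have hadjuy : (properEnhancedPowerGraph G).Adj u vy :=
      adj_of_mem hN (by rw [hvy]; exact huy) huN (hvy ▸ hyN)
    obtain ⟨-, r, hru, hrv⟩ := SimpleGraph.lineGraph_adj_iff_exists.mp (φ.map_adj_iff.mpr hadjuy)
    rw [huf] at hru
    rcases hyxr r hrv with rfl | hrx
    · right
      exact ((Sym2.mem_and_mem_iff hqq').mp ⟨hqf, hru⟩)
    · have hqr : q ≠ r := fun h => hqy (h ▸ hrv)
      exfalso
      apply hfx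
      rw [(Sym2.mem_and_mem_iff hqr).mp ⟨hqf, hru⟩,
        ← (Sym2.mem_and_mem_iff hqr).mp ⟨hqx, hrx⟩]

end PfAux
end Aux3
section Aux4
variable {G : Type} [Group G] [Fintype G] {W : Type} {H : SimpleGraph W}

namespace PfAux

lemma key (φ : properEnhancedPowerGraph G ≃g H.lineGraph)
    {M M' : Subgroup G} (hM : IsMaxCyclic M) (hM' : IsMaxCyclic M') (hMM' : M ≠ M')
    {x y m' : G}
    (hxM : x ∈ M) (hxM' : x ∈ M') (hyM : y ∈ M) (hyM' : y ∈ M') (hxy : x ≠ y)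
    (hxT : x ∉ cyclicCore G) (hyT : y ∉ cyclicCore G)
    (hm' : zpowers m' = M')
    (h2x : ∀ N : Subgroup G, IsMaxCyclic N → x ∈ N → N = M ∨ N = M')
    (h2y : ∀ N : Subgroup G, IsMaxCyclic N → y ∈ N → N = M ∨ N = M')
    (vx vy vm' : ↥(Vset G)) (hvx : (vx : G) = x) (hvy : (vy : G) = y) (hvm' : (vm' : G) = m')
    {q q' : W} (hqq' : q ≠ q')
    (hqx : q ∈ (↑(φ vx) : Sym2 W)) (hq'y : q' ∈ (↑(φ vy) : Sym2 W))
    (hm'e : (↑(φ vm') : Sym2 W) = s(q, q'))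
    (hqy : q ∉ (↑(φ vy) : Sym2 W)) (hq'x : q' ∉ (↑(φ vx) : Sym2 W))
    (hyxr : ∀ r, r ∈ (↑(φ vy) : Sym2 W) → r = q' ∨ r ∈ (↑(φ vx) : Sym2 W))
    (hxyr : ∀ r, r ∈ (↑(φ vx) : Sym2 W) → r = q ∨ r ∈ (↑(φ vy) : Sym2 W)) : False := by
  have S1 := step1 φ hM hM' hyM hyM' hxy h2x vx vy hvx hvy hqq' hqx hqy hyxr
  have S2 := step1 φ hM hM' hxM hxM' hxy.symm h2y vy vx hvy hvx hqq'.symm hq'y hq'x hxyr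
  have step3 : ∀ u : ↥(Vset G), (properEnhancedPowerGraph G).Adj u vm' → u = vx ∨ u = vy := by
    intro u hadj
    obtain ⟨hne, r, hru, hrm⟩ := SimpleGraph.lineGraph_adj_iff_exists.mp (φ.map_adj_iff.mpr hadj)
    rw [hm'e, Sym2.mem_iff] at hrm
    have hum' : (↑(φ u) : Sym2 W) ≠ (↑(φ vm') : Sym2 W) := fun h => hne (Subtype.ext h)
    rcases hrm with rfl | rfl
    · rcases S1 (↑(φ u)) (φ u).2 hru with h | h
      · exact Or.inl (φ.toEquiv.injective (Subtype.ext h))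
      · exact absurd (h.trans hm'e.symm) hum'
    · rcases S2 (↑(φ u)) (φ u).2 hru with h | h
      · exact Or.inr (φ.toEquiv.injective (Subtype.ext h))
      · exact absurd (h.trans (Sym2.eq_swap.trans hm'e.symm)) hum'
  have hm'M' : m' ∈ M' := hm' ▸ mem_zpowers m'
  have hMleM' : ∀ z : G, z ∈ M → zpowers z ≠ M' := by
    intro z hz h
    exact hMM' (hM'.2 M hM.1 (h ▸ zpowers_le.mpr hz))
  have hgen : ∀ z : G, z ∈ M' → z ∉ cyclicCore G → z = x ∨ z = y ∨ z = m' := by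
    intro z hz hzT
    by_cases hzm : z = m'
    · exact Or.inr (Or.inr hzm)
    set vz : ↥(Vset G) := ⟨z, mem_Vset_of_notMem_core hzT⟩ with hvz
    have hadjz : (properEnhancedPowerGraph G).Adj vz vm' :=
      adj_of_mem hM' (by rw [hvm']; exact hzm) hz (hvm' ▸ hm'M')
    rcases step3 vz hadjz with h | h
    · exact Or.inl (by rw [← hvx]; exact congrArg Subtype.val h)
    · exact Or.inr (Or.inl (by rw [← hvy]; exact congrArg Subtype.val h))
  have hinvT : m'⁻¹ ∉ cyclicCore G := by
    intro h
    exact hMleM' m' (M.inv_mem_iff.mp (cyclicCore_le hM h)) hm'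
  have hinv : m'⁻¹ = m' := by
    rcases hgen m'⁻¹ (M'.inv_mem hm'M') hinvT with h | h | h
    · exact absurd (by rw [← h, zpowers_inv, hm'] : zpowers x = M') (hMleM' x hxM)
    · exact absurd (by rw [← h, zpowers_inv, hm'] : zpowers y = M') (hMleM' y hyM)
    · exact h
  obtain ⟨k, hk⟩ := mem_zpowers_iff.mp (show x ∈ zpowers m' by rw [hm']; exact hxM')
  have hx1 : x = 1 ∨ x = m' := by
    rcases Int.even_or_odd k with ⟨t, rfl⟩ | ⟨t, rfl⟩
    · left
      rw [← hk, zpow_add]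
      nth_rewrite 1 [← hinv]
      rw [inv_zpow, inv_mul_cancel]
    · right
      rw [← hk, zpow_add, zpow_one, two_mul, zpow_add]
      nth_rewrite 1 [← hinv]
      rw [inv_zpow, inv_mul_cancel, one_mul]
  rcases hx1 with rfl | rfl
  · exact hxT (one_mem _)
  · exact hMleM' x hxM hm'

end PfAux
end Aux4
section Aux5
variable {G : Type} [Group G] [Fintype G] {W : Type} {H : SimpleGraph W}

namespace PfAux

lemma cond1_of_iso (φ : properEnhancedPowerGraph G ≃g H.lineGraph)
    (h2all : ∀ Mi Mj Mk : Subgroup G, IsMaxCyclic Mi → IsMaxCyclic Mj → IsMaxCyclic Mk →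
      Mi ≠ Mj → Mj ≠ Mk → Mi ≠ Mk →
      ((↑(Mi ⊓ Mj ⊓ Mk) : Set G) \ ↑(cyclicCore G)) = (∅ : Set G)) :
    ∀ Mi Mj : Subgroup G, IsMaxCyclic Mi → IsMaxCyclic Mj → Mi ≠ Mj →
      Nat.card ↥((↑(Mi ⊓ Mj) : Set G) \ ↑(cyclicCore G)) ≤ 1 := by
  intro Mi Mj hMi hMj hne
  by_contra hcard
  push_neg at hcard
  rw [Nat.card_coe_set_eq] at hcard
  obtain ⟨x, hxS, y, hyS, hxy⟩ := (Set.one_lt_ncard (Set.toFinite _)).mp hcard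
  obtain ⟨hxmem, hxT⟩ := hxS
  obtain ⟨hymem, hyT⟩ := hyS
  have hxMi : x ∈ Mi := hxmem.1
  have hxMj : x ∈ Mj := hxmem.2
  have hyMi : y ∈ Mi := hymem.1
  have hyMj : y ∈ Mj := hymem.2
  have h2x : ∀ N : Subgroup G, IsMaxCyclic N → x ∈ N → N = Mi ∨ N = Mj := by
    intro N hN hxN
    by_contra hI
    push_neg at hI
    have := h2all Mi Mj N hMi hMj hN hne hI.2.symm hI.1.symm
    rw [Set.eq_empty_iff_forall_notMem] at this
    exact this x ⟨⟨⟨hxMi, hxMj⟩, hxN⟩, hxT⟩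
  have h2y : ∀ N : Subgroup G, IsMaxCyclic N → y ∈ N → N = Mi ∨ N = Mj := by
    intro N hN hyN
    by_contra hI
    push_neg at hI
    have := h2all Mi Mj N hMi hMj hN hne hI.2.symm hI.1.symm
    rw [Set.eq_empty_iff_forall_notMem] at this
    exact this y ⟨⟨⟨hyMi, hyMj⟩, hyN⟩, hyT⟩
  obtain ⟨mi, hmi⟩ := exists_gen Mi hMi.1
  obtain ⟨mj, hmj⟩ := exists_gen Mj hMj.1
  set vx : ↥(Vset G) := ⟨x, mem_Vset_of_notMem_core hxT⟩ with hvx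
  set vy : ↥(Vset G) := ⟨y, mem_Vset_of_notMem_core hyT⟩ with hvy
  set vi : ↥(Vset G) := ⟨mi, mem_Vset_of_notMem_core (gen_not_core hMi hMj hne.symm hmi)⟩ with hvi
  set vj : ↥(Vset G) := ⟨mj, mem_Vset_of_notMem_core (gen_not_core hMj hMi hne hmj)⟩ with hvj
  -- adjacencies
  have haxi : (properEnhancedPowerGraph G).Adj vx vi :=
    adj_of_mem hMi (ne_gen hMi hMj hne.symm hxMj hmi) hxMi (hmi ▸ mem_zpowers mi)
  have haxj : (properEnhancedPowerGraph G).Adj vx vj :=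
    adj_of_mem hMj (ne_gen hMj hMi hne hxMi hmj) hxMj (hmj ▸ mem_zpowers mj)
  have hayi : (properEnhancedPowerGraph G).Adj vy vi :=
    adj_of_mem hMi (ne_gen hMi hMj hne.symm hyMj hmi) hyMi (hmi ▸ mem_zpowers mi)
  have hayj : (properEnhancedPowerGraph G).Adj vy vj :=
    adj_of_mem hMj (ne_gen hMj hMi hne hyMi hmj) hyMj (hmj ▸ mem_zpowers mj)
  have haxy : (properEnhancedPowerGraph G).Adj vx vy := adj_of_mem hMi hxy hxMi hyMi
  have hnij : ¬ (properEnhancedPowerGraph G).Adj vi vj := not_adj_gens hMi hMj hne hmi hmj rfl rfl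
  have hmij : mi ≠ mj := by rintro rfl; exact hne (hmi.symm.trans hmj)
  have hvij : vi ≠ vj := fun h => hmij (congrArg Subtype.val h)
  have hvxy : vx ≠ vy := fun h => hxy (congrArg Subtype.val h)
  -- disjointness of the generator edges
  have hdisj : ∀ r : W, r ∈ (↑(φ vi) : Sym2 W) → r ∈ (↑(φ vj) : Sym2 W) → False :=
    fun r h1 h2 => hnij (shared_imp_adj φ hvij h1 h2)
  -- shared endpoints
  obtain ⟨-, p, hpx, hpi⟩ := SimpleGraph.lineGraph_adj_iff_exists.mp (φ.map_adj_iff.mpr haxi)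
  obtain ⟨-, q, hqx, hqj⟩ := SimpleGraph.lineGraph_adj_iff_exists.mp (φ.map_adj_iff.mpr haxj)
  obtain ⟨-, p', hp'y, hp'i⟩ := SimpleGraph.lineGraph_adj_iff_exists.mp (φ.map_adj_iff.mpr hayi)
  obtain ⟨-, q', hq'y, hq'j⟩ := SimpleGraph.lineGraph_adj_iff_exists.mp (φ.map_adj_iff.mpr hayj)
  have hpq : p ≠ q := fun h => hdisj p hpi (h ▸ hqj)
  have hp'q' : p' ≠ q' := fun h => hdisj p' hp'i (h ▸ hq'j)
  have hpq' : p ≠ q' := fun h => hdisj p hpi (h ▸ hq'j)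
  have hp'q : p' ≠ q := fun h => hdisj p' hp'i (h ▸ hqj)
  have hex : (↑(φ vx) : Sym2 W) = s(p, q) := (Sym2.mem_and_mem_iff hpq).mp ⟨hpx, hqx⟩
  have hey : (↑(φ vy) : Sym2 W) = s(p', q') := (Sym2.mem_and_mem_iff hp'q').mp ⟨hp'y, hq'y⟩
  have hexey : (↑(φ vx) : Sym2 W) ≠ (↑(φ vy) : Sym2 W) :=
    fun h => hvxy (φ.toEquiv.injective (Subtype.ext h))
  obtain ⟨-, r, hrx, hry⟩ := SimpleGraph.lineGraph_adj_iff_exists.mp (φ.map_adj_iff.mpr haxy)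
  rw [hex, Sym2.mem_iff] at hrx
  rw [hey, Sym2.mem_iff] at hry
  rcases hrx with rfl | rfl
  · rcases hry with hpp' | hpq'2
    · -- p = p' : apply key with M := Mi, M' := Mj, m' := mj, endpoints q, q'
      subst hpp'
      have hqq' : q ≠ q' := by
        rintro rfl
        exact hexey (hex.trans hey.symm)
      have hejE : (↑(φ vj) : Sym2 W) = s(q, q') := (Sym2.mem_and_mem_iff hqq').mp ⟨hqj, hq'j⟩
      refine key φ hMi hMj hne hxMi hxMj hyMi hyMj hxy hxT hyT hmj h2x h2y vx vy vj rfl rfl rfl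
        hqq' hqx hq'y hejE ?_ ?_ ?_ ?_
      · rw [hey, Sym2.mem_iff]; rintro (h | h) <;> first | exact hpp' h | exact hpp' h.symm | exact hpq' h | exact hpq' h.symm | exact hpq h | exact hpq h.symm | exact hp'q h | exact hp'q h.symm | exact hp'q' h | exact hp'q' h.symm | exact hqq' h | exact hqq' h.symm
      · rw [hex, Sym2.mem_iff]; rintro (h | h) <;> first | exact hpp' h | exact hpp' h.symm | exact hpq' h | exact hpq' h.symm | exact hpq h | exact hpq h.symm | exact hp'q h | exact hp'q h.symm | exact hp'q' h | exact hp'q' h.symm | exact hqq' h | exact hqq' h.symm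
      · intro r hr
        rw [hey, Sym2.mem_iff] at hr
        rcases hr with rfl | rfl
        · exact Or.inr hpx
        · exact Or.inl rfl
      · intro r hr
        rw [hex, Sym2.mem_iff] at hr
        rcases hr with rfl | rfl
        · exact Or.inr hp'y
        · exact Or.inl rfl
    · exact hpq' hpq'2
  · rcases hry with hqp' | hqq'2
    · exact hp'q hqp'.symm
    · -- q = q' : apply key with M := Mj, M' := Mi, m' := mi, endpoints p, p'
      subst hqq'2
      have hpp' : p ≠ p' := by
        rintro rfl
        exact hexey (hex.trans hey.symm)
      have heiE : (↑(φ vi) : Sym2 W) = s(p, p') := (Sym2.mem_and_mem_iff hpp').mp ⟨hpi, hp'i⟩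
      refine key φ hMj hMi hne.symm hxMj hxMi hyMj hyMi hxy hxT hyT hmi
        (fun N hN h => (h2x N hN h).symm) (fun N hN h => (h2y N hN h).symm)
        vx vy vi rfl rfl rfl hpp' hpx hp'y heiE ?_ ?_ ?_ ?_
      · rw [hey, Sym2.mem_iff]; rintro (h | h) <;> first | exact hpp' h | exact hpp' h.symm | exact hpq' h | exact hpq' h.symm | exact hpq h | exact hpq h.symm | exact hp'q h | exact hp'q h.symm | exact hp'q' h | exact hp'q' h.symm | exact hqq' h | exact hqq' h.symm
      · rw [hex, Sym2.mem_iff]; rintro (h | h) <;> first | exact hpp' h | exact hpp' h.symm | exact hpq' h | exact hpq' h.symm | exact hpq h | exact hpq h.symm | exact hp'q h | exact hp'q h.symm | exact hp'q' h | exact hp'q' h.symm | exact hqq' h | exact hqq' h.symm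
      · intro r hr
        rw [hey, Sym2.mem_iff] at hr
        rcases hr with rfl | rfl
        · exact Or.inl rfl
        · exact Or.inr hqx
      · intro r hr
        rw [hex, Sym2.mem_iff] at hr
        rcases hr with rfl | rfl
        · exact Or.inl rfl
        · exact Or.inr hq'y

end PfAux
end Aux5
section Bwd
set_option linter.unusedVariables false

namespace PfAux
variable {G : Type} [Group G] [Fintype G]

lemma isLineGraph_of_conds
    (h1 : ∀ Mi Mj : Subgroup G, IsMaxCyclic Mi → IsMaxCyclic Mj → Mi ≠ Mj →
        Nat.card ↥((↑(Mi ⊓ Mj) : Set G) \ ↑(cyclicCore G)) ≤ 1)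
    (h2 : ∀ Mi Mj Mk : Subgroup G, IsMaxCyclic Mi → IsMaxCyclic Mj → IsMaxCyclic Mk →
        Mi ≠ Mj → Mj ≠ Mk → Mi ≠ Mk →
        ((↑(Mi ⊓ Mj ⊓ Mk) : Set G) \ ↑(cyclicCore G)) = (∅ : Set G)) :
    IsLineGraph (properEnhancedPowerGraph G) := by
  classical
  let W : Type := {M : Subgroup G // IsMaxCyclic M} ⊕ ↥(Vset G)
  have hex : ∀ v : ↥(Vset G), ∃ M : Subgroup G, IsMaxCyclic M ∧ (v : G) ∈ M :=
    fun v => mem_maxCyclic _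
  choose M0 hM0 hvM0 using hex
  let P : ↥(Vset G) → Prop := fun v => ∃ N : Subgroup G, IsMaxCyclic N ∧ (v : G) ∈ N ∧ N ≠ M0 v
  let e : ↥(Vset G) → Sym2 W := fun v =>
    if h : P v then s(Sum.inl ⟨M0 v, hM0 v⟩, Sum.inl ⟨h.choose, h.choose_spec.1⟩)
    else s(Sum.inl ⟨M0 v, hM0 v⟩, Sum.inr v)
  have hPos : ∀ v, ∀ h : P v,
      e v = s(Sum.inl ⟨M0 v, hM0 v⟩, Sum.inl ⟨h.choose, h.choose_spec.1⟩) :=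
    fun v h => dif_pos h
  have hNeg : ∀ v, ∀ h : ¬ P v, e v = s(Sum.inl ⟨M0 v, hM0 v⟩, Sum.inr v) :=
    fun v h => dif_neg h
  -- membership of clique vertices in `e v`
  have mem_inl_iff : ∀ (v : ↥(Vset G)) (N : Subgroup G) (hN : IsMaxCyclic N),
      (Sum.inl ⟨N, hN⟩ : W) ∈ e v ↔ (v : G) ∈ N := by
    intro v N hN
    by_cases hP : P v
    · rw [hPos v hP, Sym2.mem_iff]
      constructor
      · rintro (h | h)
        · obtain rfl : N = M0 v := congrArg Subtype.val (Sum.inl.inj h)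
          exact hvM0 v
        · obtain rfl : N = hP.choose := congrArg Subtype.val (Sum.inl.inj h)
          exact hP.choose_spec.2.1
      · intro hvN
        by_cases h0 : N = M0 v
        · left; exact congrArg Sum.inl (Subtype.ext h0)
        by_cases hc : N = hP.choose
        · right; exact congrArg Sum.inl (Subtype.ext hc)
        exfalso
        have hemp := h2 (M0 v) hP.choose N (hM0 v) hP.choose_spec.1 hN
          (Ne.symm hP.choose_spec.2.2) (Ne.symm hc) (Ne.symm h0)
        rw [Set.eq_empty_iff_forall_notMem] at hemp
        exact hemp (v : G) ⟨⟨⟨hvM0 v, hP.choose_spec.2.1⟩, hvN⟩, notMem_core v⟩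
    · rw [hNeg v hP, Sym2.mem_iff]
      constructor
      · rintro (h | h)
        · obtain rfl : N = M0 v := congrArg Subtype.val (Sum.inl.inj h)
          exact hvM0 v
        · exact absurd h (by simp)
      · intro hvN
        have h0 : N = M0 v := by
          by_contra hneq
          exact hP ⟨N, hN, hvN, hneq⟩
        left; exact congrArg Sum.inl (Subtype.ext h0)
  have mem_inr_iff : ∀ (v u : ↥(Vset G)), (Sum.inr u : W) ∈ e v → u = v := by
    intro v u hmem
    by_cases hP : P v
    · rw [hPos v hP, Sym2.mem_iff] at hmem
      rcases hmem with h | h <;> exact absurd h (by simp)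
    · rw [hNeg v hP, Sym2.mem_iff] at hmem
      rcases hmem with h | h
      · exact absurd h (by simp)
      · exact Sum.inr.inj h
  have hndiag : ∀ v : ↥(Vset G), ¬ (e v).IsDiag := by
    intro v
    by_cases hP : P v
    · rw [hPos v hP, Sym2.mk_isDiag_iff]
      intro h
      exact hP.choose_spec.2.2 (congrArg Subtype.val (Sum.inl.inj h)).symm
    · rw [hNeg v hP, Sym2.mk_isDiag_iff]
      simp
  let H : SimpleGraph W := SimpleGraph.fromEdgeSet (Set.range e)
  have he_mem : ∀ v : ↥(Vset G), e v ∈ H.edgeSet := by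
    intro v
    rw [SimpleGraph.edgeSet_fromEdgeSet]
    exact ⟨⟨v, rfl⟩, hndiag v⟩
  -- injectivity of e
  have heinj : Function.Injective e := by
    intro v w hvw
    by_cases hPw : P w
    · by_cases hPv : P v
      · -- both vertices lie in two cliques; use condition (i)
        have hw1 : (w : G) ∈ M0 v := by
          rw [← mem_inl_iff w (M0 v) (hM0 v), ← hvw, hPos v hPv, Sym2.mem_iff]
          left; rfl
        have hw2 : (w : G) ∈ hPv.choose := by
          rw [← mem_inl_iff w hPv.choose hPv.choose_spec.1, ← hvw, hPos v hPv, Sym2.mem_iff]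
          right; rfl
        have hcard := h1 (M0 v) hPv.choose (hM0 v) hPv.choose_spec.1
          (Ne.symm hPv.choose_spec.2.2)
        rw [Nat.card_coe_set_eq] at hcard
        by_contra hne
        have hvalne : (v : G) ≠ (w : G) := fun h => hne (Subtype.ext h)
        have : 1 < ((↑(M0 v ⊓ hPv.choose) : Set G) \ ↑(cyclicCore G)).ncard := by
          refine (Set.one_lt_ncard (Set.toFinite _)).mpr
            ⟨(v : G), ⟨⟨hvM0 v, hPv.choose_spec.2.1⟩, notMem_core v⟩,
             (w : G), ⟨⟨hw1, hw2⟩, notMem_core w⟩, hvalne⟩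
        omega
      · -- v is a pendant edge
        have : (Sum.inr v : W) ∈ e w := by rw [← hvw, hNeg v hPv, Sym2.mem_iff]; right; rfl
        exact (mem_inr_iff w v this).symm ▸ rfl
    · have : (Sum.inr w : W) ∈ e v := by rw [hvw, hNeg w hPw, Sym2.mem_iff]; right; rfl
      exact (mem_inr_iff v w this).symm
  let F : ↥(Vset G) → H.edgeSet := fun v => ⟨e v, he_mem v⟩
  have hFbij : Function.Bijective F := by
    constructor
    · intro v w h
      exact heinj (congrArg Subtype.val h)
    · rintro ⟨f, hf⟩
      rw [SimpleGraph.edgeSet_fromEdgeSet] at hf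
      obtain ⟨⟨v, hv⟩, -⟩ := hf
      exact ⟨v, Subtype.ext hv⟩
  refine ⟨W, H, ⟨⟨Equiv.ofBijective F hFbij, ?_⟩⟩⟩
  intro a b
  show H.lineGraph.Adj (F a) (F b) ↔ (properEnhancedPowerGraph G).Adj a b
  rw [SimpleGraph.lineGraph_adj_iff_exists]
  constructor
  · rintro ⟨hne, r, hra, hrb⟩
    have hab : a ≠ b := fun h => hne (by rw [h])
    have hvab : (a : G) ≠ (b : G) := fun h => hab (Subtype.ext h)
    rcases r with N | u
    · obtain ⟨N, hN⟩ := N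
      exact adj_of_mem hN hvab ((mem_inl_iff a N hN).mp hra) ((mem_inl_iff b N hN).mp hrb)
    · exact absurd ((mem_inr_iff a u hra).symm.trans (mem_inr_iff b u hrb)) hab
  · intro hadj
    have hadj' := properAdj_iff.mp hadj
    obtain ⟨N, hN, haN, hbN⟩ := (adj_iff_maxCyclic hadj'.1).mp hadj'
    have hab : a ≠ b := fun h => hadj'.1 (congrArg Subtype.val h)
    refine ⟨fun h => hab (hFbij.1 (Subtype.ext (congrArg Subtype.val h))), Sum.inl ⟨N, hN⟩,
      (mem_inl_iff a N hN).mpr haN, (mem_inl_iff b N hN).mpr hbN⟩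

end PfAux
end Bwd

/-- characterization of finite non-cyclic groups whose proper enhanced power
graph is a line graph, in terms of intersections of maximal cyclic subgroups modulo `T(G)`. -/
theorem properEnhancedPowerGraph_isLineGraph_iff (G : Type) [Group G] [Fintype G]
    (hnc : ¬ IsCyclic G) :
    IsLineGraph (properEnhancedPowerGraph G) ↔
      ((∀ Mi Mj : Subgroup G, IsMaxCyclic Mi → IsMaxCyclic Mj → Mi ≠ Mj →
          Nat.card ↥((↑(Mi ⊓ Mj) : Set G) \ ↑(cyclicCore G)) ≤ 1) ∧
       (∀ Mi Mj Mk : Subgroup G, IsMaxCyclic Mi → IsMaxCyclic Mj → IsMaxCyclic Mk →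
          Mi ≠ Mj → Mj ≠ Mk → Mi ≠ Mk →
          ((↑(Mi ⊓ Mj ⊓ Mk) : Set G) \ ↑(cyclicCore G)) = (∅ : Set G))) := by
  constructor
  · rintro ⟨W, H, ⟨φ⟩⟩
    exact ⟨PfAux.cond1_of_iso φ (PfAux.cond2_of_iso φ), PfAux.cond2_of_iso φ⟩
  · rintro ⟨h1, h2⟩
    exact PfAux.isLineGraph_of_conds h1 h2
end
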